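/- Let F be a free group of rank 2 and let H = ⟨h⟩ be an infinite cyclic subgroup of F. Then H is a retract of F if and only if there exists a free basis {a, b} of F such that h = a·c where c lies in the normal closure of b in F. -/

import Mathlib

namespace CyclicRetractAux

open FreeGroup Multiplicative

abbrev F2 := FreeGroup (Fin 2)

def mk2 (a b : F2) : F2 →* F2 := FreeGroup.lift ![a, b]

@[simp] lemma mk2_of0 (a b : F2) : mk2 a b (of 0) = a := by simp [mk2]
@[simp] lemma mk2_of1 (a b : F2) : mk2 a b (of 1) = b := by simp [mk2]

def mkEquiv (a b a' b' : F2)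
    (h1 : mk2 a b a' = of 0) (h2 : mk2 a b b' = of 1)
    (h3 : mk2 a' b' a = of 0) (h4 : mk2 a' b' b = of 1) : F2 ≃* F2 :=
  MonoidHom.toMulEquiv (mk2 a b) (mk2 a' b')
    (FreeGroup.ext_hom _ _ (by
      intro i
      fin_cases i <;> simp [h3, h4]))
    (FreeGroup.ext_hom _ _ (by
      intro i
      fin_cases i <;> simp [h1, h2]))

@[simp] lemma mkEquiv_of0 (a b a' b' : F2) (h1 h2 h3 h4) :
    mkEquiv a b a' b' h1 h2 h3 h4 (of 0) = a := by
  simp [mkEquiv, MonoidHom.toMulEquiv]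

@[simp] lemma mkEquiv_of1 (a b a' b' : F2) (h1 h2 h3 h4) :
    mkEquiv a b a' b' h1 h2 h3 h4 (of 1) = b := by
  simp [mkEquiv, MonoidHom.toMulEquiv]

/-- inversion of the first generator -/
def inv0 : F2 ≃* F2 :=
  mkEquiv (of 0)⁻¹ (of 1) (of 0)⁻¹ (of 1)
    (by simp) (by simp) (by simp) (by simp)

/-- the Nielsen move used in the Euclidean algorithm -/
def tau (q : ℤ) : F2 ≃* F2 :=
  mkEquiv (of 1) (of 0 * (of 1) ^ (-q)) (of 1 * (of 0) ^ q) (of 0)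
    (by simp [mul_assoc, ← zpow_add]) (by simp)
    (by simp) (by simp [mul_assoc, ← zpow_add])

lemma euclid : ∀ (N : ℕ) (m n : ℤ), n.natAbs ≤ N → IsCoprime m n →
    ∃ e : F2 ≃* F2, ∀ f : F2 →* Multiplicative ℤ,
      f (of 0) = ofAdd m → f (of 1) = ofAdd n →
      f (e (of 0)) = ofAdd 1 ∧ f (e (of 1)) = 1 := by
  intro N
  induction N with
  | zero =>
    intro m n hn hc
    have hn0 : n = 0 := by omega
    subst hn0
    rcases Int.isUnit_iff.mp (isCoprime_zero_right.mp hc) with rfl | rfl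
    · exact ⟨MulEquiv.refl _, fun f hf0 hf1 => by simpa [hf0] using hf1⟩
    · refine ⟨inv0, fun f hf0 hf1 => ?_⟩
      constructor
      · simp [inv0, hf0]
      · simpa [inv0] using hf1
  | succ k IH =>
    intro m n hn hc
    rcases eq_or_ne n 0 with rfl | hn0
    · exact IH m 0 (by simp) hc
    · set q := m / n with hq
      set r := m % n with hr
      have hrn : r.natAbs ≤ k := by
        have h1 : 0 ≤ r := Int.emod_nonneg m hn0
        have h2 : r < |n| := by have := Int.emod_lt m hn0; rw [Int.abs_eq_natAbs]; exact this
        have h3 : |n| = (n.natAbs : ℤ) := Int.abs_eq_natAbs n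
        omega
      have hcop : IsCoprime n r := by
        have : IsCoprime n (m + n * (-q)) := hc.symm.add_mul_left_right (-q)
        have hrq : m + n * (-q) = r := by
          rw [hr, Int.emod_def]; ring
        rwa [hrq] at this
      obtain ⟨e', he'⟩ := IH n r hrn hcop
      refine ⟨e'.trans (tau q), fun f hf0 hf1 => ?_⟩
      have key : ∀ i : Fin 2,
          f ((e'.trans (tau q)) (of i)) = (f.comp (tau q : F2 ≃* F2).toMonoidHom) (e' (of i)) := by
        intro i; rfl
      have h0 : (f.comp (tau q : F2 ≃* F2).toMonoidHom) (of 0) = ofAdd n := by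
        simp [tau, hf1]
      have h1 : (f.comp (tau q : F2 ≃* F2).toMonoidHom) (of 1) = ofAdd r := by
        have : f (of 0 * (of 1) ^ (-q)) = ofAdd m * (ofAdd n) ^ (-q) := by
          rw [_root_.map_mul, _root_.map_zpow, hf0, hf1]
        simp only [MonoidHom.comp_apply, MulEquiv.coe_toMonoidHom, tau, mkEquiv_of1]
        rw [this, hr, Int.emod_def]
        rw [← ofAdd_zsmul]
        rw [← ofAdd_add]
        congr 1
        simp [smul_eq_mul]; ring
      obtain ⟨ha, hb⟩ := he' (f.comp (tau q : F2 ≃* F2).toMonoidHom) h0 h1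
      exact ⟨by rw [key 0]; exact ha, by rw [key 1]; exact hb⟩

lemma ker_lemma (a b : F2) (hgen : Subgroup.closure ({a, b} : Set F2) = ⊤)
    (f : F2 →* Multiplicative ℤ) (hfa : f a = ofAdd 1) (hfb : f b = 1)
    (x : F2) (hx : f x = 1) : x ∈ Subgroup.normalClosure {b} := by
  set N := Subgroup.normalClosure ({b} : Set F2) with hN
  have hbN : b ∈ N := Subgroup.subset_normalClosure (Set.mem_singleton b)
  have hNker : N ≤ f.ker := Subgroup.normalClosure_le_normal (by
    intro y hy
    rw [Set.mem_singleton_iff] at hy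
    subst hy
    exact hfb)
  set fbar := QuotientGroup.lift N f hNker with hfbar
  have hcyc : ∀ y : F2 ⧸ N, y ∈ Subgroup.zpowers ((a : F2 ⧸ N)) := by
    intro y
    obtain ⟨z, rfl⟩ := QuotientGroup.mk_surjective y
    have hz : z ∈ Subgroup.closure ({a, b} : Set F2) := by rw [hgen]; trivial
    refine Subgroup.closure_induction ?_ ?_ ?_ ?_ hz
    · intro w hw
      rcases hw with rfl | hw
      · exact Subgroup.mem_zpowers _
      · rw [Set.mem_singleton_iff] at hw
        rw [hw]
        have hb1 : ((b : F2 ⧸ N)) = 1 := (QuotientGroup.eq_one_iff b).mpr hbN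
        rw [hb1]
        exact Subgroup.one_mem _
    · exact Subgroup.one_mem _
    · intro u v _ _ hu hv
      rw [QuotientGroup.mk_mul]
      exact Subgroup.mul_mem _ hu hv
    · intro u _ hu
      rw [QuotientGroup.mk_inv]
      exact Subgroup.inv_mem _ hu
  obtain ⟨k, hk⟩ := Subgroup.mem_zpowers_iff.mp (hcyc x)
  have h1 : fbar ((x : F2 ⧸ N)) = 1 := by
    simpa [hfbar] using hx
  have h2 : fbar ((a : F2 ⧸ N) ^ k) = ofAdd k := by
    rw [map_zpow]
    have : fbar ((a : F2 ⧸ N)) = ofAdd 1 := by simpa [hfbar] using hfa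
    rw [this, ← ofAdd_zsmul]
    norm_num
  have hk0 : k = 0 := by
    have h3 : (ofAdd k : Multiplicative ℤ) = 1 := by rw [← h2, hk, h1]
    simpa using h3
  subst hk0
  have : ((x : F2 ⧸ N)) = 1 := by simpa using hk.symm
  exact (QuotientGroup.eq_one_iff x).mp this

lemma range_of_eq : Set.range (of : Fin 2 → F2) = {of 0, of 1} := by
  ext y
  constructor
  · rintro ⟨i, rfl⟩
    fin_cases i
    · exact Or.inl rfl
    · exact Or.inr rfl
  · rintro (rfl | rfl)
    · exact ⟨0, rfl⟩
    · exact ⟨1, rfl⟩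

lemma gen_pair (e : F2 ≃* F2) :
    Subgroup.closure ({e (of 0), e (of 1)} : Set F2) = ⊤ := by
  have himg : ({e (of 0), e (of 1)} : Set F2) = e '' (Set.range (of : Fin 2 → F2)) := by
    rw [range_of_eq, Set.image_insert_eq, Set.image_singleton]
  rw [himg, ← MulEquiv.coe_toMonoidHom e, ← MonoidHom.map_closure,
    FreeGroup.closure_range_of]
  exact Subgroup.map_top_of_surjective _ e.surjective

end CyclicRetractAux

open CyclicRetractAux Multiplicative in
theorem cyclic_retract_iff (h : FreeGroup (Fin 2))
    (hinf : (Subgroup.zpowers h : Set (FreeGroup (Fin 2))).Infinite) :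
    (∃ φ : FreeGroup (Fin 2) →* FreeGroup (Fin 2),
        φ.range = Subgroup.zpowers h ∧ ∀ x ∈ Subgroup.zpowers h, φ x = x) ↔
    (∃ a b : FreeGroup (Fin 2),
        (∃ e : FreeGroup (Fin 2) ≃* FreeGroup (Fin 2),
          e (FreeGroup.of 0) = a ∧ e (FreeGroup.of 1) = b) ∧
        ∃ c ∈ Subgroup.normalClosure {b}, h = a * c) := by
  constructor
  · rintro ⟨φ, hrange, hid⟩
    have hmem : ∀ i : Fin 2, φ (FreeGroup.of i) ∈ Subgroup.zpowers h := by
      intro i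
      rw [← hrange]
      exact ⟨FreeGroup.of i, rfl⟩
    obtain ⟨m, hm⟩ := Subgroup.mem_zpowers_iff.mp (hmem 0)
    obtain ⟨n, hn⟩ := Subgroup.mem_zpowers_iff.mp (hmem 1)
    set f : F2 →* Multiplicative ℤ := FreeGroup.lift ![ofAdd m, ofAdd n] with hf
    have hf0 : f (FreeGroup.of 0) = ofAdd m := by simp [hf]
    have hf1 : f (FreeGroup.of 1) = ofAdd n := by simp [hf]
    have hφ : φ = (zpowersHom _ h).comp f := by
      apply FreeGroup.ext_hom
      intro i
      fin_cases i <;> simp [hf, zpowersHom_apply, ← hm, ← hn]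
    have hhne : ¬ IsOfFinOrder h := fun hfin => hinf hfin.finite_zpowers
    have hinj : Function.Injective fun k : ℤ => h ^ k :=
      injective_zpow_iff_not_isOfFinOrder.mpr hhne
    have hfh : f h = ofAdd 1 := by
      have h1 : φ h = h := hid h (Subgroup.mem_zpowers h)
      rw [hφ, MonoidHom.comp_apply, zpowersHom_apply] at h1
      have h2 : h ^ (Multiplicative.toAdd (f h)) = h ^ (1 : ℤ) := by
        rw [zpow_one, h1]
      have h3 := hinj h2
      rw [← ofAdd_toAdd (f h), h3]
    have hcomb : ∀ x : F2, ∃ u v : ℤ, f x = ofAdd (u * m + v * n) := by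
      intro x
      have hx : x ∈ Subgroup.closure (Set.range (FreeGroup.of : Fin 2 → F2)) := by
        rw [FreeGroup.closure_range_of]; trivial
      refine Subgroup.closure_induction ?_ ?_ ?_ ?_ hx
      · rintro w ⟨i, rfl⟩
        fin_cases i
        · exact ⟨1, 0, by simp [hf]⟩
        · exact ⟨0, 1, by simp [hf]⟩
      · exact ⟨0, 0, by simp⟩
      · rintro x y _ _ ⟨u, v, hx'⟩ ⟨u', v', hy'⟩
        refine ⟨u + u', v + v', ?_⟩
        rw [_root_.map_mul, hx', hy', ← ofAdd_add]
        congr 1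
        ring
      · rintro x _ ⟨u, v, hx'⟩
        refine ⟨-u, -v, ?_⟩
        rw [map_inv, hx', ← ofAdd_neg]
        congr 1
        ring
    obtain ⟨u, v, huv⟩ := hcomb h
    have hcop : IsCoprime m n := by
      refine ⟨u, v, ?_⟩
      have := huv.symm.trans hfh
      exact Multiplicative.ofAdd.injective this
    obtain ⟨e, he⟩ := CyclicRetractAux.euclid n.natAbs m n le_rfl hcop
    obtain ⟨hea, heb⟩ := he f hf0 hf1
    refine ⟨e (FreeGroup.of 0), e (FreeGroup.of 1), ⟨e, rfl, rfl⟩,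
      (e (FreeGroup.of 0))⁻¹ * h, ?_, by group⟩
    refine ker_lemma _ _ (gen_pair e) f hea heb _ ?_
    rw [_root_.map_mul, map_inv, hea, hfh]
    simp
  · rintro ⟨a, b, ⟨e, hea, heb⟩, c, hc, rfl⟩
    set ψ : F2 →* F2 := FreeGroup.lift ![a * c, 1] with hψ
    set φ : F2 →* F2 := ψ.comp e.symm.toMonoidHom with hφ
    have hψ0 : ψ (FreeGroup.of 0) = a * c := by simp [hψ]
    have hψ1 : ψ (FreeGroup.of 1) = 1 := by simp [hψ]
    have hφa : φ a = a * c := by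
      rw [hφ, MonoidHom.comp_apply]
      have : e.symm a = FreeGroup.of 0 := by rw [← hea, MulEquiv.symm_apply_apply]
      rw [MulEquiv.coe_toMonoidHom, this, hψ0]
    have hφb : φ b = 1 := by
      rw [hφ, MonoidHom.comp_apply]
      have : e.symm b = FreeGroup.of 1 := by rw [← heb, MulEquiv.symm_apply_apply]
      rw [MulEquiv.coe_toMonoidHom, this, hψ1]
    have hncl : Subgroup.normalClosure ({b} : Set F2) ≤ φ.ker :=
      Subgroup.normalClosure_le_normal (by
        intro y hy
        rw [Set.mem_singleton_iff] at hy
        subst hy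
        exact hφb)
    have hφc : φ c = 1 := hncl hc
    have hφh : φ (a * c) = a * c := by
      rw [_root_.map_mul, hφa, hφc, mul_one]
    refine ⟨φ, ?_, ?_⟩
    · apply le_antisymm
      · rintro y ⟨x, rfl⟩
        have : ∀ z : F2, ψ z ∈ Subgroup.zpowers (a * c) := by
          intro z
          refine FreeGroup.induction_on z ?_ ?_ ?_ ?_
          · rw [map_one]
            exact Subgroup.one_mem _
          · intro i
            fin_cases i
            · show ψ (FreeGroup.of 0) ∈ _
              rw [hψ0]
              exact Subgroup.mem_zpowers _
            · show ψ (FreeGroup.of 1) ∈ _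
              rw [hψ1]
              exact Subgroup.one_mem _
          · intro i hi
            rw [map_inv]
            exact Subgroup.inv_mem _ hi
          · intro x y hx hy
            rw [_root_.map_mul]
            exact Subgroup.mul_mem _ hx hy
        exact this (e.symm x)
      · rw [Subgroup.zpowers_le]
        exact ⟨a * c, hφh⟩
    · rintro x ⟨k, rfl⟩
      rw [map_zpow, hφh]
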